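/- Let w_1 ≥ w_2 ≥ ... ≥ w_{q-1} > 0, w = Σ w_i, and a = gcd(w_1, w). Then the vector (w_1(w-1)/a)·(1,1,...,1) ∈ ℤ^{2(q-1)} is a nonnegative integral linear combination of the degree vectors of the edge-colored digraph family G(w̄); moreover α(G(w̄)) = w_1(w-1)/a, i.e., w_1(w-1)/a divides every integer t such that (t,...,t) is a nonnegative integral combination of the degree vectors. -/

import Mathlib

open Finset

/-- Vertex set of the edge-colored digraph `G(w̄)`: class `i` has `w i` vertices. -/
def Vtx (k : ℕ) (w : Fin k → ℕ) : Type := Σ i : Fin k, Fin (w i)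

instance (k : ℕ) (w : Fin k → ℕ) : Fintype (Vtx k w) := by unfold Vtx; infer_instance
instance (k : ℕ) (w : Fin k → ℕ) : DecidableEq (Vtx k w) := by unfold Vtx; infer_instance

/-- In `G(w̄)` there is an edge of color `c` from `u` to `v` (for `u ≠ v`) iff `u`
lies in class `c`.  The indegree of `v` with respect to color `c`. -/
def indeg (k : ℕ) (w : Fin k → ℕ) (c : Fin k) (v : Vtx k w) : ℕ :=
  (univ.filter (fun u : Vtx k w => u ≠ v ∧ u.1 = c)).card

/-- The outdegree of `v` with respect to color `c` in `G(w̄)`. -/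
def outdeg (k : ℕ) (w : Fin k → ℕ) (c : Fin k) (v : Vtx k w) : ℕ :=
  (univ.filter (fun u : Vtx k w => u ≠ v ∧ v.1 = c)).card

/-- `(t, t, …, t) ∈ ℤ^{2k}` is a nonnegative integral combination of the degree
vectors of the family `𝒢(w̄)`, consisting of `G(w̄)` together with the single-edge
digraphs `G_i` (one edge of color `i`, contributing the degree vectors of its two
endpoints) for each `i` with `w i < w1`. -/
def IsComboConst (k : ℕ) (w : Fin k → ℕ) (w1 t : ℕ) : Prop :=
  ∃ (f : Vtx k w → ℕ) (gin gout : Fin k → ℕ),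
    (∀ i, ¬ w i < w1 → gin i = 0 ∧ gout i = 0) ∧
    (∀ c, (∑ v : Vtx k w, f v * indeg k w c v) + gin c = t) ∧
    (∀ c, (∑ v : Vtx k w, f v * outdeg k w c v) + gout c = t)

/- ### Auxiliary lemmas -/

lemma vtx_sum {k : ℕ} {w : Fin k → ℕ} {M : Type} [AddCommMonoid M] (g : Vtx k w → M) :
    ∑ v : Vtx k w, g v = ∑ i, ∑ j, g ⟨i, j⟩ := by
  rw [show (univ : Finset (Vtx k w)) = univ.sigma (fun _ => univ) from
    (Finset.univ_sigma_univ).symm]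
  exact Finset.sum_sigma _ _ _

lemma card_class {k : ℕ} {w : Fin k → ℕ} (c : Fin k) :
    (univ.filter (fun u : Vtx k w => u.1 = c)).card = w c := by
  rw [Finset.card_filter, vtx_sum]
  rw [Finset.sum_eq_single c]
  · simp
  · intro b _ hb; simp [hb]
  · simp

lemma indeg_eq {k : ℕ} {w : Fin k → ℕ} (c : Fin k) (v : Vtx k w) :
    indeg k w c v = if v.1 = c then w c - 1 else w c := by
  unfold indeg
  have h : (univ.filter (fun u : Vtx k w => u ≠ v ∧ u.1 = c))
      = (univ.filter (fun u : Vtx k w => u.1 = c)).erase v := by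
    ext u; simp [Finset.mem_erase, and_comm]
  rw [h]
  by_cases hv : v.1 = c
  · rw [Finset.card_erase_of_mem (by simp [hv]), card_class, if_pos hv]
  · rw [Finset.erase_eq_of_notMem (by simp [hv]), card_class, if_neg hv]

lemma outdeg_eq {k : ℕ} {w : Fin k → ℕ} (c : Fin k) (v : Vtx k w) :
    outdeg k w c v = if v.1 = c then (∑ i, w i) - 1 else 0 := by
  unfold outdeg
  by_cases hv : v.1 = c
  · rw [if_pos hv]
    have h : (univ.filter (fun u : Vtx k w => u ≠ v ∧ v.1 = c)) = univ.erase v := by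
      ext u; simp [Finset.mem_erase, hv]
    rw [h, Finset.card_erase_of_mem (mem_univ v), Finset.card_univ]
    congr 1
    simp [Vtx, Fintype.card_sigma]
  · rw [if_neg hv]
    rw [Finset.card_eq_zero]
    ext u; simp [hv]

lemma min_sum (p s : ℕ) : ∀ n : ℕ, ∑ i ∈ range n, min p (s - p * i) = min s (p * n) := by
  intro n; induction n with
  | zero => simp
  | succ n ih =>
    rw [Finset.sum_range_succ, ih]
    have h : p * (n + 1) = p * n + p := by ring
    omega

lemma sum_ite_zero (n : ℕ) (hn : 0 < n) (X : ℕ) :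
    ∑ j : Fin n, (if (j : ℕ) = 0 then X else 0) = X := by
  rw [Finset.sum_eq_single (⟨0, hn⟩ : Fin n)]
  · simp
  · intro b _ hb
    have : ¬ (b : ℕ) = 0 := by
      intro h; exact hb (by simp [Fin.ext_iff, h])
    simp [this]
  · simp

lemma sumA {k : ℕ} {w : Fin k → ℕ} (hpos : ∀ i, 0 < w i) (f : Vtx k w → ℕ) (c : Fin k) :
    ((∑ v : Vtx k w, f v * indeg k w c v : ℕ) : ℤ)
      = (∑ v : Vtx k w, (f v : ℤ)) * (w c : ℤ) - ∑ j : Fin (w c), (f ⟨c, j⟩ : ℤ) := by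
  have h1 : ∀ v : Vtx k w, ((indeg k w c v : ℕ) : ℤ)
      = (w c : ℤ) - (if v.1 = c then 1 else 0) := by
    intro v; rw [indeg_eq]
    split_ifs with h
    · rw [Nat.cast_sub (hpos c)]; norm_num
    · simp
  push_cast
  calc ∑ v : Vtx k w, (f v : ℤ) * (indeg k w c v : ℤ)
      = ∑ v : Vtx k w, ((f v : ℤ) * (w c : ℤ) - (if v.1 = c then (f v : ℤ) else 0)) := by
        refine Finset.sum_congr rfl fun v _ => ?_
        rw [h1 v]; split_ifs <;> ring
    _ = (∑ v : Vtx k w, (f v : ℤ)) * (w c : ℤ)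
          - ∑ v : Vtx k w, (if v.1 = c then (f v : ℤ) else 0) := by
        rw [Finset.sum_sub_distrib, Finset.sum_mul]
    _ = _ := by
        congr 1
        rw [vtx_sum (fun v : Vtx k w => if v.1 = c then (f v : ℤ) else 0)]
        rw [Finset.sum_eq_single c]
        · simp
        · intro b _ hb; simp [hb]
        · simp

lemma sumB {k : ℕ} {w : Fin k → ℕ} (f : Vtx k w → ℕ) (c : Fin k) :
    (∑ v : Vtx k w, f v * outdeg k w c v)
      = (∑ j : Fin (w c), f ⟨c, j⟩) * ((∑ i, w i) - 1) := by
  simp_rw [outdeg_eq]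
  rw [vtx_sum]
  rw [Finset.sum_eq_single c]
  · simp [Finset.sum_mul]
  · intro b _ hb; simp [hb]
  · simp

theorem stmt13 (k : ℕ) (hk : 0 < k) (w : Fin k → ℕ)
    (hpos : ∀ i, 0 < w i) (hmono : ∀ i j : Fin k, i ≤ j → w j ≤ w i) :
    IsComboConst k w (w ⟨0, hk⟩)
      (w ⟨0, hk⟩ * (∑ i, w i - 1) / Nat.gcd (w ⟨0, hk⟩) (∑ i, w i)) ∧
    ∀ t, IsComboConst k w (w ⟨0, hk⟩) t →
      (w ⟨0, hk⟩ * (∑ i, w i - 1) / Nat.gcd (w ⟨0, hk⟩) (∑ i, w i)) ∣ t := by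
  set W := ∑ i, w i with hWdef
  set w1 := w ⟨0, hk⟩ with hw1def
  set a := Nat.gcd w1 W with hadef
  set p := w1 / a with hpdef
  set s := W / a with hsdef
  have hWpos : 0 < W := Finset.sum_pos (fun i _ => hpos i) ⟨⟨0, hk⟩, mem_univ _⟩
  obtain ⟨b, hb⟩ : ∃ b, W = b + 1 := ⟨W - 1, by omega⟩
  have hapos : 0 < a := Nat.gcd_pos_of_pos_left _ (hpos _)
  have hap : a * p = w1 := Nat.mul_div_cancel' (Nat.gcd_dvd_left _ _)
  have has : a * s = W := Nat.mul_div_cancel' (Nat.gcd_dvd_right _ _)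
  have hwle : ∀ c, w c ≤ w1 := fun c => hmono ⟨0, hk⟩ c (by simp [Fin.le_def])
  have hw1W : w1 ≤ W := Finset.single_le_sum (f := w) (fun i _ => Nat.zero_le _) (mem_univ _)
  have hps : p ≤ s := Nat.le_of_mul_le_mul_left (by rw [hap, has]; exact hw1W) hapos
  have hWk : W ≤ k * w1 := by
    calc W = ∑ i : Fin k, w i := rfl
    _ ≤ ∑ _i : Fin k, w1 := Finset.sum_le_sum (fun i _ => hwle i)
    _ = k * w1 := by simp [Finset.sum_const, Finset.card_univ, mul_comm]
  have hsk : s ≤ p * k := by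
    refine Nat.le_of_mul_le_mul_left ?_ hapos
    calc a * s = W := has
      _ ≤ k * w1 := hWk
      _ = k * (a * p) := by rw [hap]
      _ = a * (p * k) := by ring
  have ht0 : w1 * (W - 1) / a = p * b := by
    rw [hb, Nat.add_sub_cancel, ← hap]
    rw [Nat.mul_assoc, Nat.mul_div_cancel_left _ hapos]
  have e1 : s * w1 = p * b + p := by
    calc s * w1 = s * (a * p) := by rw [hap]
      _ = (a * s) * p := by ring
      _ = W * p := by rw [has]
      _ = (b + 1) * p := by rw [hb]
      _ = p * b + p := by ring
  rw [ht0]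
  -- the distribution of weights
  set S : Fin k → ℕ := fun c => min p (s - p * (c : ℕ)) with hSdef
  have hSle : ∀ c, S c ≤ p := fun c => min_le_left _ _
  have hSsum : ∑ c, S c = s := by
    rw [hSdef]
    rw [Fin.sum_univ_eq_sum_range (fun i => min p (s - p * i)) k, min_sum]
    omega
  have hSw1 : ∀ c, w c = w1 → S c = p := by
    intro c hc
    have h1 : ((c : ℕ) + 1) * w1 ≤ W := by
      have hmem : ∀ i ∈ Iic c, w1 ≤ w i := fun i hi =>
        le_trans (le_of_eq hc.symm) (hmono i c (mem_Iic.mp hi))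
      calc ((c : ℕ) + 1) * w1 = ∑ _i ∈ Iic c, w1 := by
            rw [Finset.sum_const, Fin.card_Iic, smul_eq_mul]
        _ ≤ ∑ i ∈ Iic c, w i := Finset.sum_le_sum hmem
        _ ≤ ∑ i, w i := Finset.sum_le_sum_of_subset (Finset.subset_univ _)
    have h2 : p * ((c : ℕ) + 1) ≤ s := by
      refine Nat.le_of_mul_le_mul_left ?_ hapos
      calc a * (p * ((c : ℕ) + 1)) = ((c : ℕ) + 1) * (a * p) := by ring
        _ = ((c : ℕ) + 1) * w1 := by rw [hap]
        _ ≤ W := h1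
        _ = a * s := has.symm
    have h3 : p * ((c : ℕ) + 1) = p * (c : ℕ) + p := by ring
    simp only [hSdef]
    omega
  -- the weight function on vertices
  set f : Vtx k w → ℕ := fun v => if (v.2 : ℕ) = 0 then S v.1 else 0 with hfdef
  have hfc : ∀ c : Fin k, ∑ j : Fin (w c), f ⟨c, j⟩ = S c := by
    intro c
    simp only [hfdef]
    exact sum_ite_zero (w c) (hpos c) (S c)
  have hF : ∑ v : Vtx k w, f v = s := by
    rw [vtx_sum f]
    simp_rw [hfc]
    exact hSsum
  have hFZ : (∑ v : Vtx k w, (f v : ℤ)) = (s : ℤ) := by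
    rw [show (∑ v : Vtx k w, (f v : ℤ)) = ((∑ v : Vtx k w, f v : ℕ) : ℤ) by push_cast; rfl, hF]
  have hfcZ : ∀ c : Fin k, (∑ j : Fin (w c), (f ⟨c, j⟩ : ℤ)) = (S c : ℤ) := by
    intro c
    rw [show (∑ j : Fin (w c), (f ⟨c, j⟩ : ℤ)) = ((∑ j : Fin (w c), f ⟨c, j⟩ : ℕ) : ℤ) by
      push_cast; rfl, hfc]
  have hle : ∀ c, s * w c ≤ p * b + S c := by
    intro c
    rcases eq_or_lt_of_le (hwle c) with hc | hc
    · rw [hc, e1]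
      have := hSw1 c hc
      omega
    · -- w c < w1
      obtain ⟨u, hu⟩ : ∃ u, w1 = u + 1 := ⟨w1 - 1, by have := hpos (⟨0, hk⟩ : Fin k); omega⟩
      have h4 : w c ≤ u := by omega
      have h5 : s * w c ≤ s * u := Nat.mul_le_mul_left s h4
      have h6 : s * w1 = s * u + s := by rw [hu]; ring
      omega
  constructor
  · -- existence of the combination
    refine ⟨f, fun c => p * b + S c - s * w c, fun c => (p - S c) * b, ?_, ?_, ?_⟩
    · intro i hi
      dsimp only
      have hc : w i = w1 := le_antisymm (hwle i) (by omega)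
      have hSi := hSw1 i hc
      constructor
      · rw [hc, hSi, e1]; omega
      · rw [hSi, Nat.sub_self, Nat.zero_mul]
    · intro c
      dsimp only
      have hA := sumA hpos f c
      have hcast : (((∑ v : Vtx k w, f v * indeg k w c v) + (p * b + S c - s * w c) : ℕ) : ℤ)
          = ((p * b : ℕ) : ℤ) := by
        rw [Nat.cast_add, Nat.cast_sub (hle c), hA, hFZ, hfcZ]
        push_cast
        ring
      exact_mod_cast hcast
    · intro c
      dsimp only
      rw [sumB f c, hfc, show W - 1 = b by omega]
      have h7 : (p - S c) * b = p * b - S c * b := by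
        rw [Nat.sub_mul]
      have h8 : S c * b ≤ p * b := Nat.mul_le_mul_right b (hSle c)
      omega
  · -- divisibility
    rintro t ⟨g, gin, gout, hg, hin, hout⟩
    obtain ⟨hgin0, hgout0⟩ := hg ⟨0, hk⟩ (lt_irrefl _)
    have hA := sumA hpos g ⟨0, hk⟩
    have hB := sumB g ⟨0, hk⟩
    set S0 : ℕ := ∑ j : Fin (w1), g ⟨⟨0, hk⟩, j⟩ with hS0def
    have h2 : S0 * b = t := by
      have := hout ⟨0, hk⟩
      rw [hgout0, add_zero, hB, show W - 1 = b by omega] at this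
      exact this
    have h1 : (∑ v : Vtx k w, g v * indeg k w ⟨0, hk⟩ v) = t := by
      have := hin ⟨0, hk⟩
      rw [hgin0, add_zero] at this
      exact this
    have hFW : (∑ v : Vtx k w, g v) * w1 = S0 * W := by
      have hZ : ((∑ v : Vtx k w, g v : ℕ) : ℤ) * (w1 : ℤ) = (S0 : ℤ) * (W : ℤ) := by
        have hc : ((∑ v : Vtx k w, g v : ℕ) : ℤ) = ∑ v : Vtx k w, (g v : ℤ) := by
          push_cast; rfl
        have hc2 : ((S0 : ℕ) : ℤ) = ∑ j : Fin (w1), (g ⟨⟨0, hk⟩, j⟩ : ℤ) := by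
          rw [hS0def]; push_cast; rfl
        rw [hc, hc2]
        have := hA
        rw [h1] at this
        -- this : (t : ℤ) = F * w1 - S0
        have h2Z : ((S0 : ℕ) : ℤ) * (b : ℕ) = (t : ℕ) := by exact_mod_cast h2
        rw [hc2] at h2Z
        have hbW : (W : ℤ) = (b : ℤ) + 1 := by exact_mod_cast hb
        rw [hbW]
        linarith [this, h2Z]
      exact_mod_cast hZ
    have hpF : p * (∑ v : Vtx k w, g v) = s * S0 := by
      refine Nat.eq_of_mul_eq_mul_left hapos ?_
      calc a * (p * (∑ v : Vtx k w, g v)) = (a * p) * (∑ v : Vtx k w, g v) := by ring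
        _ = (∑ v : Vtx k w, g v) * w1 := by rw [hap]; ring
        _ = S0 * W := hFW
        _ = S0 * (a * s) := by rw [has]
        _ = a * (s * S0) := by ring
    have cop : Nat.Coprime p s := Nat.coprime_div_gcd_div_gcd hapos
    have hpd : p ∣ S0 := by
      refine cop.dvd_of_dvd_mul_right ?_
      exact ⟨∑ v : Vtx k w, g v, by rw [hpF]; ring⟩
    obtain ⟨d, hd⟩ := hpd
    exact ⟨d, by rw [← h2, hd]; ring⟩
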